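/- Coercivity of the weighted sum of Bregman distances for small γ: Let b : ℝ → ℝ be continuous with 0 < b₁ ≤ b(s) ≤ b₂ for all s, let 𝒢(s) := ∫₀^s ∫₀^r b(u)⁻¹ du dr, and let f : ℝ → ℝ be twice differentiable with f''(s) ≥ −f₁ for all s, where f₁ > 0. Then for every γ with 0 < γ ≤ 1/(2 f₁ b₂) and all x, y ∈ ℝ, γ·(f(x) − f(y) − f'(y)(x − y)) + (𝒢(x) − 𝒢(y) − 𝒢'(y)(x − y)) ≥ (x − y)²/(4 b₂). -/

import Mathlib

open intervalIntegral

/-- Taylor-type lower bound for a twice differentiable function with second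
derivative bounded below. -/
lemma taylor_lb (h h' h'' : ℝ → ℝ) (hd : ∀ s, HasDerivAt h (h' s) s)
    (hd2 : ∀ s, HasDerivAt h' (h'' s) s) (m : ℝ) (hm : ∀ s, m ≤ h'' s) (x y : ℝ) :
    m * (x - y) ^ 2 / 2 ≤ h x - h y - h' y * (x - y) := by
  set q : ℝ → ℝ := fun s => h s - h y - h' y * (s - y) - m * (s - y) ^ 2 / 2 with hqdef
  have hq : ∀ s, HasDerivAt q (h' s - h' y - m * (s - y)) s := by
    intro s
    have h1 : HasDerivAt (fun s : ℝ => h' y * (s - y)) (h' y) s := by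
      simpa using ((hasDerivAt_id s).sub_const y).const_mul (h' y)
    have h2 : HasDerivAt (fun s : ℝ => m * (s - y) ^ 2 / 2) (m * (s - y)) s := by
      have : HasDerivAt (fun s : ℝ => (s - y) ^ 2) (2 * (s - y)) s := by
        simpa using ((hasDerivAt_id s).sub_const y).fun_pow 2
      have := (this.const_mul m).div_const 2
      rw [show m * (s - y) = m * (2 * (s - y)) / 2 by ring]; exact this
    have := (((hd s).sub_const (h y)).fun_sub h1).fun_sub h2
    convert this using 1
  -- p is monotone
  set p : ℝ → ℝ := fun s => h' s - m * s with hpdef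
  have hp : ∀ s, HasDerivAt p (h'' s - m) s := fun s => by
    simpa using (hd2 s).fun_sub ((hasDerivAt_id s).const_mul m)
  have hpm : Monotone p := by
    apply monotone_of_deriv_nonneg (fun s => (hp s).differentiableAt)
    intro s; rw [(hp s).deriv]; linarith [hm s]
  have hqderiv : ∀ s, deriv q s = p s - p y := by
    intro s; rw [(hq s).deriv]; simp [hpdef]; ring
  have hqy : q y = 0 := by simp [hqdef]
  have hqx : 0 ≤ q x := by
    rcases le_total y x with hle | hle
    · have hmono : MonotoneOn q (Set.Ici y) := by
        apply monotoneOn_of_deriv_nonneg (convex_Ici y)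
          (fun s _ => ((hq s).differentiableAt).continuousAt.continuousWithinAt)
          (fun s _ => ((hq s).differentiableAt).differentiableWithinAt)
        intro s hs
        rw [hqderiv]
        have : y ≤ s := le_of_lt (by simpa using hs)
        linarith [hpm this]
      have := hmono (Set.self_mem_Ici) (Set.mem_Ici.mpr hle) hle
      linarith [hqy ▸ this]
    · have hanti : AntitoneOn q (Set.Iic y) := by
        apply antitoneOn_of_deriv_nonpos (convex_Iic y)
          (fun s _ => ((hq s).differentiableAt).continuousAt.continuousWithinAt)
          (fun s _ => ((hq s).differentiableAt).differentiableWithinAt)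
        intro s hs
        rw [hqderiv]
        have : s ≤ y := le_of_lt (by simpa using hs)
        linarith [hpm this]
      have := hanti (Set.mem_Iic.mpr hle) (Set.self_mem_Iic) hle
      linarith [hqy ▸ this]
  simp only [hqdef] at hqx
  linarith

/-- Coercivity of the weighted sum of Bregman distances for small `γ`. -/
theorem weighted_bregman_coercivity
    (b : ℝ → ℝ) (b₁ b₂ : ℝ) (hb₁ : 0 < b₁)
    (hbl : ∀ s, b₁ ≤ b s) (hbu : ∀ s, b s ≤ b₂)
    (hbc : Continuous b)
    (G : ℝ → ℝ)
    (hG : ∀ s, G s = ∫ r in (0:ℝ)..s, ∫ u in (0:ℝ)..r, (b u)⁻¹)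
    (f f' f'' : ℝ → ℝ)
    (hf' : ∀ s, HasDerivAt f (f' s) s)
    (hf'' : ∀ s, HasDerivAt f' (f'' s) s)
    (f₁ : ℝ) (hf₁ : 0 < f₁)
    (hsemi : ∀ s, -f₁ ≤ f'' s)
    (γ : ℝ) (hγ : 0 < γ) (hγsmall : γ ≤ 1 / (2 * f₁ * b₂)) :
    ∀ x y : ℝ, (x - y) ^ 2 / (4 * b₂) ≤
      γ * (f x - f y - f' y * (x - y)) + (G x - G y - deriv G y * (x - y)) := by
  intro x y
  have hb₂ : 0 < b₂ := lt_of_lt_of_le hb₁ (le_trans (hbl 0) (hbu 0))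
  have hbne : ∀ s, b s ≠ 0 := fun s => ne_of_gt (lt_of_lt_of_le hb₁ (hbl s))
  have hbinv : Continuous fun u => (b u)⁻¹ := hbc.inv₀ hbne
  set g : ℝ → ℝ := fun r => ∫ u in (0:ℝ)..r, (b u)⁻¹ with hgdef
  have hg : ∀ r, HasDerivAt g ((b r)⁻¹) r := fun r =>
    intervalIntegral.integral_hasDerivAt_right (hbinv.intervalIntegrable 0 r)
      (hbinv.stronglyMeasurableAtFilter _ _) hbinv.continuousAt
  have hgc : Continuous g :=
    (Differentiable.continuous (fun s => (hg s).differentiableAt))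
  have hGeq : G = fun s => ∫ r in (0:ℝ)..s, g r := funext hG
  have hGd : ∀ s, HasDerivAt G (g s) s := by
    intro s
    rw [hGeq]
    exact intervalIntegral.integral_hasDerivAt_right (hgc.intervalIntegrable 0 s)
      (hgc.stronglyMeasurableAtFilter _ _) hgc.continuousAt
  have hderivG : deriv G y = g y := (hGd y).deriv
  have hGtaylor := taylor_lb G g (fun s => (b s)⁻¹) hGd hg b₂⁻¹
    (fun s => inv_anti₀ (lt_of_lt_of_le hb₁ (hbl s)) (hbu s)) x y
  have hftaylor := taylor_lb f f' f'' hf' hf'' (-f₁) hsemi x y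
  rw [hderivG]
  have hmul : γ * ((-f₁) * (x - y) ^ 2 / 2) ≤ γ * (f x - f y - f' y * (x - y)) :=
    mul_le_mul_of_nonneg_left hftaylor (le_of_lt hγ)
  have hsq : 0 ≤ (x - y) ^ 2 := sq_nonneg _
  have h2 : γ * (2 * f₁ * b₂) ≤ 1 := by
    rw [le_div_iff₀ (by positivity : (0:ℝ) < 2 * f₁ * b₂)] at hγsmall
    exact hγsmall
  have key : (x - y) ^ 2 / (4 * b₂) ≤
      γ * ((-f₁) * (x - y) ^ 2 / 2) + b₂⁻¹ * (x - y) ^ 2 / 2 := by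
    rw [div_le_iff₀ (by positivity : (0:ℝ) < 4 * b₂)]
    have hinv : b₂⁻¹ * b₂ = 1 := inv_mul_cancel₀ (ne_of_gt hb₂)
    nlinarith [mul_le_mul_of_nonneg_right h2 hsq]
  linarith
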